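/- Let B, D > 0 and A, C ∈ ℝ. The system x₂ = (1/B) x₁ (x₁ - A), x₁ = (1/D) x₂ (x₂ - C) has a solution (x₁, x₂) with x₁ > 0 and x₂ > 0 if and only if A ≥ 0, or C ≥ 0, or (A < 0 and C < 0 and D B > A C). Moreover, when a positive solution exists it is unique. -/

import Mathlib

/-- Auxiliary: given a point `a > max 0 A` where the composed map is below the
diagonal, IVT produces a positive solution. -/
lemma stmt_1_aux_exists (A B C D : ℝ) (hB : 0 < B) (hD : 0 < D) (a : ℝ)
    (ha0 : 0 < a) (haA : A < a)
    (hFa : (a * (a - A) / B) * ((a * (a - A) / B) - C) / D - a < 0) :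
    ∃ x₁ x₂ : ℝ, 0 < x₁ ∧ 0 < x₂ ∧
      x₂ = (1 / B) * x₁ * (x₁ - A) ∧ x₁ = (1 / D) * x₂ * (x₂ - C) := by
  have hB' : B ≠ 0 := ne_of_gt hB
  have hD' : D ≠ 0 := ne_of_gt hD
  set F : ℝ → ℝ := fun x => (x * (x - A) / B) * ((x * (x - A) / B) - C) / D - x with hF
  have hFcont : Continuous F := by
    apply Continuous.sub _ continuous_id
    fun_prop
  set b : ℝ := max a (max (|A| + 1) (B * |C| + B ^ 2 * D + 1)) with hb
  have hab : a ≤ b := le_max_left _ _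
  have hbA : |A| + 1 ≤ b := le_trans (le_max_left _ _) (le_max_right _ _)
  have hbC : B * |C| + B ^ 2 * D + 1 ≤ b := le_trans (le_max_right _ _) (le_max_right _ _)
  have hb0 : 0 < b := lt_of_lt_of_le (by positivity) hbC
  have hbA' : 1 ≤ b - A := by
    have := abs_le.1 (le_refl |A|)
    have : A ≤ |A| := le_abs_self A
    linarith
  have hCabs : C ≤ |C| := le_abs_self C
  have key : B ^ 2 * D * b ≤ b * (b - A) * (b * (b - A) - B * C) := by
    have h1 : b ≤ b * (b - A) := by nlinarith
    have h2 : B ^ 2 * D ≤ b * (b - A) - B * C := by nlinarith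
    have h3 : (0:ℝ) ≤ b * (b - A) := mul_nonneg hb0.le (by linarith)
    nlinarith [mul_le_mul h1 h2 (by positivity) h3]
  have hFb : 0 ≤ F b := by
    have hFb' : F b = (b * (b - A) * (b * (b - A) - B * C) - B ^ 2 * D * b) / (B ^ 2 * D) := by
      simp only [hF]
      field_simp
    rw [hFb']
    apply div_nonneg (by linarith) (by positivity)
  have hivt := intermediate_value_Icc hab hFcont.continuousOn
  have h0mem : (0 : ℝ) ∈ Set.Icc (F a) (F b) := ⟨le_of_lt hFa, hFb⟩
  obtain ⟨c, hc, hFc⟩ := hivt h0mem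
  have hc0 : 0 < c := lt_of_lt_of_le ha0 hc.1
  have hcA : A < c := lt_of_lt_of_le haA hc.1
  refine ⟨c, c * (c - A) / B, hc0, ?_, ?_, ?_⟩
  · exact div_pos (mul_pos hc0 (by linarith)) hB
  · field_simp
  · have hFc' : (c * (c - A) / B) * ((c * (c - A) / B) - C) / D - c = 0 := hFc
    field_simp at hFc' ⊢
    rw [mul_zero] at hFc'
    rcases mul_eq_zero.1 hFc' with h | h
    · linarith
    · linarith

theorem stmt_1 (A B C D : ℝ) (hB : 0 < B) (hD : 0 < D) :
    ((∃ x₁ x₂ : ℝ, 0 < x₁ ∧ 0 < x₂ ∧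
        x₂ = (1 / B) * x₁ * (x₁ - A) ∧ x₁ = (1 / D) * x₂ * (x₂ - C)) ↔
      (0 ≤ A ∨ 0 ≤ C ∨ (A < 0 ∧ C < 0 ∧ A * C < D * B))) ∧
    (∀ x₁ x₂ x₁' x₂' : ℝ, 0 < x₁ → 0 < x₂ →
      x₂ = (1 / B) * x₁ * (x₁ - A) → x₁ = (1 / D) * x₂ * (x₂ - C) →
      0 < x₁' → 0 < x₂' →
      x₂' = (1 / B) * x₁' * (x₁' - A) → x₁' = (1 / D) * x₂' * (x₂' - C) →
      x₁ = x₁' ∧ x₂ = x₂') := by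
  have hB' : B ≠ 0 := ne_of_gt hB
  have hD' : D ≠ 0 := ne_of_gt hD
  constructor
  · constructor
    · -- solution implies condition
      rintro ⟨x₁, x₂, h1, h2, e1, e2⟩
      have he1 : B * x₂ = x₁ * (x₁ - A) := by
        rw [e1]; field_simp
      have he2 : D * x₁ = x₂ * (x₂ - C) := by
        rw [e2]; field_simp
      by_contra hcon
      push_neg at hcon
      obtain ⟨hA, hC, h3⟩ := hcon
      have hA' : A < 0 := hA
      have hC' : C < 0 := hC
      have hDB : D * B ≤ A * C := h3 hA hC
      have key : B * D = (x₁ - A) * (x₂ - C) := by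
        have h12 : x₁ * x₂ ≠ 0 := ne_of_gt (mul_pos h1 h2)
        apply mul_left_cancel₀ h12
        linear_combination (D * x₁) * he1 + (x₁ * (x₁ - A)) * he2
      nlinarith [mul_pos h1 h2, mul_pos (neg_pos.2 hC') h1, mul_pos (neg_pos.2 hA') h2]
    · -- condition implies solution
      intro hcond
      rcases lt_or_ge 0 A with hApos | hAle
      · -- case A > 0 : F(A) = -A < 0, pick a slightly right of A
        set F : ℝ → ℝ := fun x => (x * (x - A) / B) * ((x * (x - A) / B) - C) / D - x with hF
        have hFcont : Continuous F := by
          apply Continuous.sub _ continuous_id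
          fun_prop
        have hFA : F A = -A := by simp [hF]
        have htend : Filter.Tendsto F (nhds A) (nhds (F A)) := hFcont.continuousAt
        have hev : ∀ᶠ x in nhds A, F x < 0 := by
          apply htend.eventually_lt_const
          rw [hFA]; linarith
        have hev' : ∀ᶠ x in nhdsWithin A (Set.Ioi A), F x < 0 ∧ A < x := by
          filter_upwards [hev.filter_mono nhdsWithin_le_nhds, self_mem_nhdsWithin] with x hx hx'
          exact ⟨hx, hx'⟩
        obtain ⟨a, hFa, haA⟩ := hev'.exists
        exact stmt_1_aux_exists A B C D hB hD a (lt_trans hApos haA) haA hFa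
      · -- case A ≤ 0 : then A*C < D*B in all subcases
        have hAC : A * C < D * B := by
          rcases hcond with h | h | h
          · have : A = 0 := le_antisymm hAle h
            rw [this]; simpa using mul_pos hD hB
          · nlinarith
          · exact h.2.2
        set H : ℝ → ℝ := fun x => ((x - A) / B) * ((x * (x - A) / B) - C) / D - 1 with hH
        have hHcont : Continuous H := by
          apply Continuous.sub _ continuous_const
          fun_prop
        have hH0 : H 0 = A * C / (B * D) - 1 := by
          simp only [hH]
          field_simp
          ring
        have hH0neg : H 0 < 0 := by
          rw [hH0]
          have : A * C / (B * D) < 1 := by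
            rw [div_lt_one (by positivity)]
            nlinarith
          linarith
        have htend : Filter.Tendsto H (nhds 0) (nhds (H 0)) := hHcont.continuousAt
        have hev : ∀ᶠ x in nhds (0 : ℝ), H x < 0 := htend.eventually_lt_const hH0neg
        have hev' : ∀ᶠ x in nhdsWithin (0 : ℝ) (Set.Ioi 0), H x < 0 ∧ 0 < x := by
          filter_upwards [hev.filter_mono nhdsWithin_le_nhds, self_mem_nhdsWithin] with x hx hx'
          exact ⟨hx, hx'⟩
        obtain ⟨a, hHa, ha0⟩ := hev'.exists
        have hFa : (a * (a - A) / B) * ((a * (a - A) / B) - C) / D - a < 0 := by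
          have hid : (a * (a - A) / B) * ((a * (a - A) / B) - C) / D - a = a * H a := by
            simp only [hH]
            field_simp
          rw [hid]
          exact mul_neg_of_pos_of_neg ha0 hHa
        exact stmt_1_aux_exists A B C D hB hD a ha0 (lt_of_le_of_lt hAle ha0) hFa
  · -- uniqueness
    intro x₁ x₂ x₁' x₂' h1 h2 e1 e2 h1' h2' e1' e2'
    have he1 : B * x₂ = x₁ * (x₁ - A) := by rw [e1]; field_simp
    have he2 : D * x₁ = x₂ * (x₂ - C) := by rw [e2]; field_simp
    have he1' : B * x₂' = x₁' * (x₁' - A) := by rw [e1']; field_simp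
    have he2' : D * x₁' = x₂' * (x₂' - C) := by rw [e2']; field_simp
    have hx1A : 0 < x₁ - A := by nlinarith [mul_pos hB h2]
    have hx2C : 0 < x₂ - C := by nlinarith [mul_pos hD h1]
    have key : B * D = (x₁ - A) * (x₂ - C) := by
      have h12 : x₁ * x₂ ≠ 0 := ne_of_gt (mul_pos h1 h2)
      apply mul_left_cancel₀ h12
      linear_combination (D * x₁) * he1 + (x₁ * (x₁ - A)) * he2
    have hx1eq : x₁ = x₁' := by
      by_contra hne
      have d1 : B * (x₂ - x₂') = (x₁ - x₁') * (x₁ + x₁' - A) := by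
        linear_combination he1 - he1'
      have d2 : D * (x₁ - x₁') = (x₂ - x₂') * (x₂ + x₂' - C) := by
        linear_combination he2 - he2'
      have hne2 : x₂ ≠ x₂' := by
        intro h
        apply hne
        rw [h] at d2
        simp at d2
        rcases d2 with d2 | d2
        · exact absurd d2 hD'
        · linarith [sub_eq_zero.1 d2]
      have hmul : (B * (x₂ - x₂')) * (D * (x₁ - x₁')) =
          ((x₁ - x₁') * (x₁ + x₁' - A)) * ((x₂ - x₂') * (x₂ + x₂' - C)) := by
        rw [d1, d2]
      have heq : B * D = (x₁ + x₁' - A) * (x₂ + x₂' - C) := by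
        have hne12 : (x₁ - x₁') * (x₂ - x₂') ≠ 0 :=
          mul_ne_zero (sub_ne_zero.2 hne) (sub_ne_zero.2 hne2)
        apply mul_left_cancel₀ hne12
        linear_combination hmul
      nlinarith [mul_pos hx1A h2', mul_pos h1' hx2C, mul_pos h1' h2']
    refine ⟨hx1eq, ?_⟩
    apply mul_left_cancel₀ hB'
    rw [he1, he1', hx1eq]
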